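/- Let E be a rearrangement-invariant quasi-Banach function space on (0,∞) with functional ρ_E and Boyd indices p_E, q_E. Let 0 < Θ < ∞ and 0 < r < p_E, and assume either (q_E < ∞ and 1/Θ + 1/q_E > 1/r) or (q_E = ∞ and 1/Θ ≥ 1/r). Then ρ_E(t ↦ min{t^{-1/r}, t^{1/Θ − 1/r}}) < ∞. -/

import Mathlib

open MeasureTheory Set Filter
open scoped ENNReal NNReal

noncomputable section

/-- The non-increasing rearrangement of a function on `(0, ∞)` (with Lebesgue measure):
`f^*(t) = inf {λ : |{s > 0 : |f(s)| > λ}| ≤ t}`. -/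
def rearr (f : ℝ → ℝ) (t : ℝ) : ℝ≥0∞ :=
  sInf {lam : ℝ≥0∞ |
    volume {s : ℝ | 0 < s ∧ lam < ENNReal.ofReal |f s|} ≤ ENNReal.ofReal t}

/-- auxiliary: the prototype step function. -/
def iov (L : ℝ) : ℝ → ℝ≥0∞ := fun t => if ENNReal.ofReal t < ENNReal.ofReal L then 1 else 0

lemma rearr_indicator (c : ℝ≥0) {L : ℝ} :
    rearr (fun s => (c : ℝ) * Set.indicator (Set.Ioo 0 L) (fun _ => (1 : ℝ)) s)
      = fun t => if ENNReal.ofReal t < ENNReal.ofReal L then (c : ℝ≥0∞) else 0 := by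
  funext t
  set f : ℝ → ℝ := fun s => (c : ℝ) * Set.indicator (Set.Ioo 0 L) (fun _ => (1 : ℝ)) s with hf
  have hvol : ∀ lam : ℝ≥0∞, volume {s : ℝ | 0 < s ∧ lam < ENNReal.ofReal |f s|}
      = if lam < (c : ℝ≥0∞) then ENNReal.ofReal L else 0 := by
    intro lam
    by_cases hlam : lam < (c : ℝ≥0∞)
    · rw [if_pos hlam]
      have hset : {s : ℝ | 0 < s ∧ lam < ENNReal.ofReal |f s|} = Set.Ioo 0 L := by
        ext s
        simp only [Set.mem_setOf_eq, Set.mem_Ioo]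
        constructor
        · rintro ⟨hs, hlt⟩
          refine ⟨hs, ?_⟩
          by_contra hsL
          have hnot : s ∉ Set.Ioo (0:ℝ) L := by
            simp only [Set.mem_Ioo]; tauto
          have : f s = 0 := by
            simp only [hf, Set.indicator_of_notMem hnot, mul_zero]
          rw [this] at hlt
          simp at hlt
        · rintro ⟨hs0, hsL⟩
          refine ⟨hs0, ?_⟩
          have : f s = (c : ℝ) := by
            simp only [hf, Set.indicator_of_mem (Set.mem_Ioo.mpr ⟨hs0, hsL⟩), mul_one]
          rw [this, abs_of_nonneg c.coe_nonneg, ENNReal.ofReal_coe_nnreal]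
          exact hlam
      rw [hset, Real.volume_Ioo, sub_zero]
    · rw [if_neg hlam]
      have hset : {s : ℝ | 0 < s ∧ lam < ENNReal.ofReal |f s|} = (∅ : Set ℝ) := by
        ext s
        simp only [Set.mem_setOf_eq, Set.mem_empty_iff_false, iff_false, not_and]
        intro _
        have hle : ENNReal.ofReal |f s| ≤ (c : ℝ≥0∞) := by
          have h1 : |f s| ≤ (c : ℝ) := by
            by_cases hm : s ∈ Set.Ioo (0:ℝ) L
            · simp [hf, Set.indicator_of_mem hm, abs_of_nonneg c.coe_nonneg]
            · simp [hf, Set.indicator_of_notMem hm, c.coe_nonneg]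
          calc ENNReal.ofReal |f s| ≤ ENNReal.ofReal (c : ℝ) := ENNReal.ofReal_le_ofReal h1
            _ = (c : ℝ≥0∞) := ENNReal.ofReal_coe_nnreal
        intro hlt
        exact hlam (lt_of_lt_of_le hlt hle)
      rw [hset, measure_empty]
  unfold rearr
  simp only [hvol]
  by_cases ht : ENNReal.ofReal t < ENNReal.ofReal L
  · rw [if_pos ht]
    have hset2 : {lam : ℝ≥0∞ | (if lam < (c:ℝ≥0∞) then ENNReal.ofReal L else 0) ≤ ENNReal.ofReal t}
        = Set.Ici (c : ℝ≥0∞) := by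
      ext lam
      simp only [Set.mem_setOf_eq, Set.mem_Ici]
      constructor
      · intro h
        by_contra hlt
        rw [if_pos (not_le.mp hlt)] at h
        exact absurd (lt_of_lt_of_le ht h) (lt_irrefl _)
      · intro h
        rw [if_neg (not_lt.mpr h)]
        exact zero_le
    rw [hset2, csInf_Ici]
  · rw [if_neg ht]
    have hset2 : {lam : ℝ≥0∞ | (if lam < (c:ℝ≥0∞) then ENNReal.ofReal L else 0) ≤ ENNReal.ofReal t}
        = Set.univ := by
      ext lam
      simp only [Set.mem_setOf_eq, Set.mem_univ, iff_true]
      split_ifs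
      · exact not_lt.mp ht
      · exact zero_le
    rw [hset2, sInf_univ]
    rfl


/-- A rearrangement-invariant quasi-Banach function space on `(0,∞)`, given by the
functional `ρ` on (extended-)nonnegative measurable functions on `(0,∞)`. -/
structure RIQBFS where
  ρ : (ℝ → ℝ≥0∞) → ℝ≥0∞
  C : ℝ
  one_le_C : 1 ≤ C
  eq_zero_iff : ∀ f : ℝ → ℝ≥0∞, ρ f = 0 ↔ f =ᵐ[volume.restrict (Set.Ioi (0 : ℝ))] 0
  smul_eq : ∀ (c : ℝ≥0) (f : ℝ → ℝ≥0∞), ρ (fun t => (c : ℝ≥0∞) * f t) = (c : ℝ≥0∞) * ρ f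
  quasi_triangle : ∀ f g : ℝ → ℝ≥0∞, ρ (fun t => f t + g t) ≤ ENNReal.ofReal C * (ρ f + ρ g)
  mono : ∀ f g : ℝ → ℝ≥0∞,
    (∀ᵐ t ∂(volume.restrict (Set.Ioi (0 : ℝ))), g t ≤ f t) → ρ g ≤ ρ f
  fatou : ∀ (fn : ℕ → ℝ → ℝ≥0∞) (f : ℝ → ℝ≥0∞),
    (∀ n, ∀ᵐ t ∂(volume.restrict (Set.Ioi (0 : ℝ))), fn n t ≤ fn (n + 1) t) →
    (∀ᵐ t ∂(volume.restrict (Set.Ioi (0 : ℝ))),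
      Filter.Tendsto (fun n => fn n t) Filter.atTop (nhds (f t))) →
    Filter.Tendsto (fun n => ρ (fn n)) Filter.atTop (nhds (ρ f))
  indicator_finite : ∀ ω : Set ℝ, MeasurableSet ω → ω ⊆ Set.Ioi (0 : ℝ) → volume ω < ⊤ →
    ρ (Set.indicator ω fun _ => 1) < ⊤

/-- The quasi-norm of the space `E`: `‖f‖_E = ρ_E (f^*)`. -/
def RIQBFS.normE (E : RIQBFS) (f : ℝ → ℝ) : ℝ≥0∞ := E.ρ (rearr f)

/-- The operator norm of the dilation operator `(D_a f)(t) = f (a t)` on `E`. -/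
def dilNorm (E : RIQBFS) (a : ℝ) : ℝ≥0∞ :=
  ⨆ (f : ℝ → ℝ) (_ : Measurable f) (_ : E.normE f ≤ 1), E.normE fun t => f (a * t)

/-- The lower Boyd index
`p_E = sup {p > 0 : ∃ c > 0, ∀ 0 < a < 1, ‖D_a‖ ≤ c a^{-1/p}}` (an element of `(0, ∞]`). -/
def lowerBoyd (E : RIQBFS) : ℝ≥0∞ :=
  sSup (ENNReal.ofReal ''
    {p : ℝ | 0 < p ∧ ∃ c : ℝ, 0 < c ∧ ∀ a : ℝ, 0 < a → a < 1 →
      dilNorm E a ≤ ENNReal.ofReal (c * a ^ (-(1 / p)))})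

/-- The upper Boyd index
`q_E = inf {q > 0 : ∃ c > 0, ∀ a ≥ 1, ‖D_a‖ ≤ c a^{-1/q}}` (an element of `(0, ∞]`,
with `inf ∅ = ∞`). -/
def upperBoyd (E : RIQBFS) : ℝ≥0∞ :=
  sInf (ENNReal.ofReal ''
    {q : ℝ | 0 < q ∧ ∃ c : ℝ, 0 < c ∧ ∀ a : ℝ, 1 ≤ a →
      dilNorm E a ≤ ENNReal.ofReal (c * a ^ (-(1 / q)))})

/-- homogeneity with `ofReal` coefficients -/
lemma rho_coef_iov (E : RIQBFS) (x : ℝ) (f : ℝ → ℝ≥0∞) :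
    E.ρ (fun t => ENNReal.ofReal x * f t) = ENNReal.ofReal x * E.ρ f :=
  E.smul_eq x.toNNReal f

lemma rho_if_eq (E : RIQBFS) (c : ℝ≥0) (L : ℝ) :
    E.ρ (fun t => if ENNReal.ofReal t < ENNReal.ofReal L then (c : ℝ≥0∞) else 0)
      = (c : ℝ≥0∞) * E.ρ (iov L) := by
  rw [show (fun t => if ENNReal.ofReal t < ENNReal.ofReal L then (c : ℝ≥0∞) else 0)
      = fun t => (c : ℝ≥0∞) * iov L t from funext fun t => by
        simp [iov, mul_ite, mul_one, mul_zero]]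
  exact E.smul_eq c (iov L)

/-- iterated quasi-triangle inequality -/
lemma sum_bound (E : RIQBFS) : ∀ (n : ℕ) (s : ℕ → ℝ → ℝ≥0∞),
    E.ρ (fun t => ∑ k ∈ Finset.range n, s k t) ≤
      ∑ k ∈ Finset.range n, ENNReal.ofReal E.C ^ (k + 1) * E.ρ (s k) := by
  intro n
  induction n with
  | zero =>
    intro s
    simp only [Finset.range_zero, Finset.sum_empty, le_refl]
    have : E.ρ (fun _ => (0:ℝ≥0∞)) = 0 := (E.eq_zero_iff _).2 (ae_of_all _ fun _ => rfl)
    exact le_of_eq this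
  | succ n ih =>
    intro s
    have h1 : (fun t => ∑ k ∈ Finset.range (n+1), s k t)
        = fun t => (∑ k ∈ Finset.range n, s (k+1) t) + s 0 t :=
      funext fun t => Finset.sum_range_succ' (fun k => s k t) n
    rw [h1]
    calc E.ρ (fun t => (∑ k ∈ Finset.range n, s (k+1) t) + s 0 t)
        ≤ ENNReal.ofReal E.C * (E.ρ (fun t => ∑ k ∈ Finset.range n, s (k+1) t) + E.ρ (s 0)) :=
          E.quasi_triangle _ _
      _ ≤ ENNReal.ofReal E.C *
            ((∑ k ∈ Finset.range n, ENNReal.ofReal E.C ^ (k+1) * E.ρ (s (k+1))) + E.ρ (s 0)) :=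
          mul_le_mul' le_rfl (add_le_add (ih (fun k => s (k+1))) le_rfl)
      _ = ∑ k ∈ Finset.range (n+1), ENNReal.ofReal E.C ^ (k+1) * E.ρ (s k) := by
          rw [Finset.sum_range_succ' (fun k => ENNReal.ofReal E.C ^ (k+1) * E.ρ (s k)) n,
            mul_add, Finset.mul_sum]
          congr 1
          · exact Finset.sum_congr rfl fun k _ => by ring
          · ring

/-- `ρ(iov (1/a)) ≤ ρ(iov 1) * ‖D_a‖`. -/
lemma dil_bound (E : RIQBFS) (hne : E.ρ (iov 1) ≠ 0) (hfin : E.ρ (iov 1) ≠ ⊤)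
    {a : ℝ} (ha : 0 < a) :
    E.ρ (iov (1/a)) ≤ E.ρ (iov 1) * dilNorm E a := by
  set N := E.ρ (iov 1) with hN
  set n : ℝ≥0 := N.toNNReal with hn
  have hNn : (n : ℝ≥0∞) = N := ENNReal.coe_toNNReal hfin
  have hn0 : n ≠ 0 := by
    intro h
    rw [h, ENNReal.coe_zero] at hNn
    exact hne hNn.symm
  set φ : ℝ → ℝ := fun s => ((n⁻¹ : ℝ≥0) : ℝ) * Set.indicator (Set.Ioo 0 1) (fun _ => (1:ℝ)) s
    with hφ
  have hφmeas : Measurable φ :=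
    measurable_const.mul (measurable_const.indicator measurableSet_Ioo)
  have hrearrφ : rearr φ = fun t => ((n⁻¹ : ℝ≥0) : ℝ≥0∞) * iov 1 t := by
    rw [hφ, rearr_indicator (n⁻¹)]
    funext t
    simp [iov, mul_ite, mul_one, mul_zero]
  have hnormφ : E.normE φ = 1 := by
    rw [RIQBFS.normE, hrearrφ, E.smul_eq n⁻¹ (iov 1), ← hN, ← hNn, ← ENNReal.coe_mul,
      inv_mul_cancel₀ hn0, ENNReal.coe_one]
  have hdil : E.normE (fun t => φ (a * t)) ≤ dilNorm E a := by
    rw [dilNorm]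
    refine le_trans ?_ (le_iSup _ φ)
    rw [iSup_pos hφmeas, iSup_pos hnormφ.le]
  have hcomp : (fun t => φ (a * t))
      = fun t => ((n⁻¹ : ℝ≥0) : ℝ) * Set.indicator (Set.Ioo 0 (1/a)) (fun _ => (1:ℝ)) t := by
    funext t
    simp only [hφ]
    congr 1
    have hiff : a * t ∈ Set.Ioo (0:ℝ) 1 ↔ t ∈ Set.Ioo (0:ℝ) (1/a) := by
      simp only [Set.mem_Ioo]
      constructor
      · rintro ⟨h1, h2⟩
        refine ⟨by nlinarith, ?_⟩
        rw [lt_div_iff₀ ha]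
        nlinarith
      · rintro ⟨h1, h2⟩
        rw [lt_div_iff₀ ha] at h2
        exact ⟨by nlinarith, by nlinarith⟩
    by_cases h : t ∈ Set.Ioo (0:ℝ) (1/a)
    · rw [Set.indicator_of_mem h, Set.indicator_of_mem (hiff.mpr h)]
    · rw [Set.indicator_of_notMem h, Set.indicator_of_notMem (fun hm => h (hiff.mp hm))]
  have hval : E.normE (fun t => φ (a * t)) = ((n⁻¹ : ℝ≥0) : ℝ≥0∞) * E.ρ (iov (1/a)) := by
    rw [RIQBFS.normE, hcomp, rearr_indicator n⁻¹, rho_if_eq]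
  have h2 : ((n⁻¹ : ℝ≥0) : ℝ≥0∞) * E.ρ (iov (1/a)) ≤ dilNorm E a := hval ▸ hdil
  calc E.ρ (iov (1/a)) = (n : ℝ≥0∞) * (((n⁻¹ : ℝ≥0) : ℝ≥0∞) * E.ρ (iov (1/a))) := by
        rw [← mul_assoc, ← ENNReal.coe_mul, mul_inv_cancel₀ hn0, ENNReal.coe_one, one_mul]
    _ ≤ (n : ℝ≥0∞) * dilNorm E a := mul_le_mul' le_rfl h2
    _ = N * dilNorm E a := by rw [hNn]

lemma main_aux (E : RIQBFS) (F : ℝ → ℝ≥0∞) (s : ℕ → ℝ → ℝ≥0∞) (K : ℝ≥0∞) (hK : K ≠ ⊤)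
    (hcov : ∀ t : ℝ, 0 < t → ∃ k, F t ≤ s k t)
    (hb : ∀ k, E.ρ (s k) ≤ K * ((ENNReal.ofReal (2 * E.C))⁻¹) ^ k) :
    E.ρ F < ⊤ := by
  have hC1 : 1 ≤ E.C := E.one_le_C
  have hC0 : (0:ℝ) < E.C := lt_of_lt_of_le one_pos hC1
  set C' := ENNReal.ofReal E.C with hC'
  have hC'ne0 : C' ≠ 0 := by
    simp [hC', ENNReal.ofReal_eq_zero, not_le, hC0]
  have hC'top : C' ≠ ⊤ := ENNReal.ofReal_ne_top
  have hkey : C' * (ENNReal.ofReal (2 * E.C))⁻¹ ≤ 2⁻¹ := by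
    rw [ENNReal.ofReal_mul (by norm_num : (0:ℝ) ≤ 2)]
    rw [ENNReal.mul_inv (Or.inl (by simp)) (Or.inl (by simp))]
    rw [show (ENNReal.ofReal 2) = 2 by simp [ENNReal.ofReal_ofNat]]
    calc C' * (2⁻¹ * C'⁻¹) = 2⁻¹ * (C' * C'⁻¹) := by ring
      _ ≤ 2⁻¹ := by rw [ENNReal.mul_inv_cancel hC'ne0 hC'top, mul_one]
  have hstep : ∀ k, C' ^ (k+1) * E.ρ (s k) ≤ C' * K * 2⁻¹ ^ k := by
    intro k
    calc C' ^ (k+1) * E.ρ (s k)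
        ≤ C' ^ (k+1) * (K * ((ENNReal.ofReal (2 * E.C))⁻¹) ^ k) := mul_le_mul' le_rfl (hb k)
      _ = C' * K * (C' * (ENNReal.ofReal (2 * E.C))⁻¹) ^ k := by
          rw [pow_succ, mul_pow]; ring
      _ ≤ C' * K * 2⁻¹ ^ k := by
          exact mul_le_mul' le_rfl (pow_le_pow_left' hkey k)
  have hgeom : ∀ n : ℕ, (∑ k ∈ Finset.range n, (2⁻¹ : ℝ≥0∞) ^ k) ≤ 2 := fun n =>
    calc (∑ k ∈ Finset.range n, (2⁻¹ : ℝ≥0∞) ^ k) ≤ ∑' k : ℕ, (2⁻¹ : ℝ≥0∞) ^ k :=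
          ENNReal.sum_le_tsum _
      _ = (1 - 2⁻¹)⁻¹ := ENNReal.tsum_geometric _
      _ = 2 := by rw [ENNReal.one_sub_inv_two]; simp
  have hB : ∀ n, E.ρ (fun t => ∑ k ∈ Finset.range n, s k t) ≤ C' * K * 2 := by
    intro n
    calc E.ρ (fun t => ∑ k ∈ Finset.range n, s k t)
        ≤ ∑ k ∈ Finset.range n, C' ^ (k+1) * E.ρ (s k) := sum_bound E n s
      _ ≤ ∑ k ∈ Finset.range n, C' * K * 2⁻¹ ^ k := Finset.sum_le_sum fun k _ => hstep k
      _ = C' * K * ∑ k ∈ Finset.range n, (2⁻¹:ℝ≥0∞) ^ k := by rw [← Finset.mul_sum]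
      _ ≤ C' * K * 2 := mul_le_mul' le_rfl (hgeom n)
  have hmono : ∀ n, ∀ᵐ t ∂(volume.restrict (Set.Ioi (0:ℝ))),
      (∑ k ∈ Finset.range n, s k t) ≤ ∑ k ∈ Finset.range (n+1), s k t := by
    intro n
    refine ae_of_all _ fun t => ?_
    exact Finset.sum_le_sum_of_subset (Finset.range_subset_range.mpr (Nat.le_succ n))
  have htend : ∀ᵐ t ∂(volume.restrict (Set.Ioi (0:ℝ))),
      Filter.Tendsto (fun n => ∑ k ∈ Finset.range n, s k t) Filter.atTop
        (nhds (∑' k, s k t)) :=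
    ae_of_all _ fun t => ENNReal.tendsto_nat_tsum _
  have hlim := E.fatou (fun n => fun t => ∑ k ∈ Finset.range n, s k t)
    (fun t => ∑' k, s k t) hmono htend
  have hρS : E.ρ (fun t => ∑' k, s k t) ≤ C' * K * 2 := le_of_tendsto' hlim hB
  have hF : E.ρ F ≤ E.ρ (fun t => ∑' k, s k t) := by
    refine E.mono _ _ ((ae_restrict_iff' measurableSet_Ioi).2 (ae_of_all _ fun t ht => ?_))
    obtain ⟨k, hk⟩ := hcov t ht
    exact hk.trans (ENNReal.le_tsum k)
  refine lt_of_le_of_lt (hF.trans hρS) ?_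
  exact ENNReal.mul_lt_top (ENNReal.mul_lt_top hC'top.lt_top hK.lt_top) (by norm_num)

lemma piece_bound (E : RIQBFS) (hne : E.ρ (iov 1) ≠ 0) (hfin : E.ρ (iov 1) ≠ ⊤)
    {x a c w : ℝ} (ha : 0 < a) (hx : 0 ≤ x)
    (hd : dilNorm E a ≤ ENNReal.ofReal c) (hxc : x * c ≤ w) :
    E.ρ (fun t => ENNReal.ofReal x * iov (1/a) t) ≤ E.ρ (iov 1) * ENNReal.ofReal w := by
  rw [rho_coef_iov]
  calc ENNReal.ofReal x * E.ρ (iov (1/a))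
      ≤ ENNReal.ofReal x * (E.ρ (iov 1) * dilNorm E a) :=
        mul_le_mul' le_rfl (dil_bound E hne hfin ha)
    _ ≤ ENNReal.ofReal x * (E.ρ (iov 1) * ENNReal.ofReal c) :=
        mul_le_mul' le_rfl (mul_le_mul' le_rfl hd)
    _ = E.ρ (iov 1) * (ENNReal.ofReal x * ENNReal.ofReal c) := by ring
    _ = E.ρ (iov 1) * ENNReal.ofReal (x * c) := by rw [ENNReal.ofReal_mul hx]
    _ ≤ E.ρ (iov 1) * ENNReal.ofReal w :=
        mul_le_mul' le_rfl (ENNReal.ofReal_le_ofReal hxc)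

lemma iov_one_ne_top (E : RIQBFS) : E.ρ (iov 1) ≠ ⊤ := by
  have hle : E.ρ (iov 1) ≤ E.ρ (Set.indicator (Set.Ioo (0:ℝ) 1) fun _ => 1) := by
    refine E.mono _ _ ((ae_restrict_iff' measurableSet_Ioi).2 (ae_of_all _ fun t ht => ?_))
    by_cases h : ENNReal.ofReal t < ENNReal.ofReal 1
    · have ht1 : t < 1 := by
        have := (ENNReal.ofReal_lt_ofReal_iff one_pos).1 h
        linarith
      have : t ∈ Set.Ioo (0:ℝ) 1 := ⟨ht, ht1⟩
      rw [Set.indicator_of_mem this]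
      unfold iov
      rw [if_pos h]
    · unfold iov
      rw [if_neg h]
      exact zero_le
  have hfin : E.ρ (Set.indicator (Set.Ioo (0:ℝ) 1) fun _ => 1) < ⊤ := by
    refine E.indicator_finite _ measurableSet_Ioo (fun x hx => hx.1) ?_
    rw [Real.volume_Ioo]
    exact ENNReal.ofReal_lt_top
  exact (lt_of_le_of_lt hle hfin).ne

lemma iov_one_ne_zero (E : RIQBFS) : E.ρ (iov 1) ≠ 0 := by
  intro h
  have hae := (E.eq_zero_iff (iov 1)).1 h
  have h0 : (volume.restrict (Set.Ioi (0:ℝ))) {t | iov 1 t ≠ 0} = 0 := by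
    rw [Filter.EventuallyEq] at hae
    exact hae
  have hsub : Set.Ioo (0:ℝ) 1 ⊆ {t | iov 1 t ≠ 0} := by
    intro t ht
    have hlt : ENNReal.ofReal t < ENNReal.ofReal 1 := by
      rw [ENNReal.ofReal_lt_ofReal_iff one_pos]
      exact ht.2
    simp only [Set.mem_setOf_eq, iov, if_pos hlt]
    exact one_ne_zero
  have := measure_mono_null hsub h0
  rw [Measure.restrict_apply' measurableSet_Ioi] at this
  have heq : Set.Ioo (0:ℝ) 1 ∩ Set.Ioi 0 = Set.Ioo 0 1 := by
    ext x; simp only [Set.mem_inter_iff, Set.mem_Ioo, Set.mem_Ioi]; tauto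
  rw [heq, Real.volume_Ioo] at this
  simp at this

lemma g_bound (E : RIQBFS) {b p c₁ r : ℝ} (hb1 : 1 < b) (hr : 0 < r) (hp : 0 < p)
    (hc₁ : 0 < c₁)
    (hdil₁ : ∀ a : ℝ, 0 < a → a < 1 → dilNorm E a ≤ ENNReal.ofReal (c₁ * a ^ (-(1/p))))
    (hsmall : b ^ (1/p - 1/r) ≤ (2 * E.C)⁻¹) (k : ℕ) :
    E.ρ (fun t => ENNReal.ofReal (b ^ ((k:ℝ) * (-(1/r)))) * iov (b ^ ((k:ℝ)+1)) t)
      ≤ E.ρ (iov 1) * ENNReal.ofReal ((c₁ * b ^ (1/p)) * ((2*E.C)⁻¹)^k) := by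
  have hb0 : (0:ℝ) < b := lt_trans one_pos hb1
  set a : ℝ := b ^ (-((k:ℝ)+1)) with hadef
  have ha : 0 < a := Real.rpow_pos_of_pos hb0 _
  have hkneg : -((k:ℝ)+1) < 0 := by
    have : (0:ℝ) ≤ (k:ℝ) := Nat.cast_nonneg k
    linarith
  have ha1 : a < 1 := Real.rpow_lt_one_of_one_lt_of_neg hb1 hkneg
  have hiov : iov (b ^ ((k:ℝ)+1)) = iov (1/a) := by
    rw [hadef, one_div, ← Real.rpow_neg hb0.le, neg_neg]
  rw [hiov]
  refine piece_bound E (iov_one_ne_zero E) (iov_one_ne_top E) ha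
    (Real.rpow_nonneg hb0.le _) (hdil₁ a ha ha1) ?_
  -- real inequality
  have h1 : b ^ ((k:ℝ) * (-(1/r))) * (c₁ * a ^ (-(1/p)))
      = c₁ * b ^ ((k:ℝ) * (-(1/r)) + (-((k:ℝ)+1)) * (-(1/p))) := by
    rw [hadef, ← Real.rpow_mul hb0.le, Real.rpow_add hb0]
    ring
  have h2 : (c₁ * b ^ (1/p)) * (b ^ (1/p - 1/r)) ^ k
      = c₁ * b ^ (1/p + (1/p - 1/r) * (k:ℝ)) := by
    rw [← Real.rpow_natCast (b ^ (1/p - 1/r)) k, ← Real.rpow_mul hb0.le, Real.rpow_add hb0]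
    ring
  have hexp : (k:ℝ) * (-(1/r)) + (-((k:ℝ)+1)) * (-(1/p)) = 1/p + (1/p - 1/r) * (k:ℝ) := by
    ring
  calc b ^ ((k:ℝ) * (-(1/r))) * (c₁ * a ^ (-(1/p)))
      = (c₁ * b ^ (1/p)) * (b ^ (1/p - 1/r)) ^ k := by rw [h1, h2, hexp]
    _ ≤ (c₁ * b ^ (1/p)) * ((2*E.C)⁻¹)^k := by
        refine mul_le_mul_of_nonneg_left ?_ (by positivity)
        exact pow_le_pow_left₀ (Real.rpow_nonneg hb0.le _) hsmall k

lemma h_bound (E : RIQBFS) {b q c₂ β : ℝ} (hb1 : 1 < b) (hβ : 0 < β) (hq : 0 < q)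
    (hc₂ : 0 < c₂)
    (hdil₂ : ∀ a : ℝ, 1 ≤ a → dilNorm E a ≤ ENNReal.ofReal (c₂ * a ^ (-(1/q))))
    (hsmall : b ^ (β - 1/q) ≤ (2 * E.C)⁻¹) (k : ℕ) :
    E.ρ (fun t => ENNReal.ofReal (b ^ (((k:ℝ)+1) * β)) * iov (b ^ (-(k:ℝ))) t)
      ≤ E.ρ (iov 1) * ENNReal.ofReal ((c₂ * b ^ β) * ((2*E.C)⁻¹)^k) := by
  have hb0 : (0:ℝ) < b := lt_trans one_pos hb1
  set a : ℝ := b ^ ((k:ℝ)) with hadef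
  have ha : 0 < a := Real.rpow_pos_of_pos hb0 _
  have ha1 : 1 ≤ a := Real.one_le_rpow hb1.le (Nat.cast_nonneg k)
  have hiov : iov (b ^ (-(k:ℝ))) = iov (1/a) := by
    rw [hadef, one_div, ← Real.rpow_neg hb0.le]
  rw [hiov]
  refine piece_bound E (iov_one_ne_zero E) (iov_one_ne_top E) ha
    (Real.rpow_nonneg hb0.le _) (hdil₂ a ha1) ?_
  have h1 : b ^ (((k:ℝ)+1) * β) * (c₂ * a ^ (-(1/q)))
      = c₂ * b ^ (((k:ℝ)+1) * β + (k:ℝ) * (-(1/q))) := by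
    rw [hadef, ← Real.rpow_mul hb0.le, Real.rpow_add hb0]
    ring
  have h2 : (c₂ * b ^ β) * (b ^ (β - 1/q)) ^ k
      = c₂ * b ^ (β + (β - 1/q) * (k:ℝ)) := by
    rw [← Real.rpow_natCast (b ^ (β - 1/q)) k, ← Real.rpow_mul hb0.le, Real.rpow_add hb0]
    ring
  have hexp : ((k:ℝ)+1) * β + (k:ℝ) * (-(1/q)) = β + (β - 1/q) * (k:ℝ) := by ring
  calc b ^ (((k:ℝ)+1) * β) * (c₂ * a ^ (-(1/q)))
      = (c₂ * b ^ β) * (b ^ (β - 1/q)) ^ k := by rw [h1, h2, hexp]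
    _ ≤ (c₂ * b ^ β) * ((2*E.C)⁻¹)^k := by
        refine mul_le_mul_of_nonneg_left ?_ (by positivity)
        exact pow_le_pow_left₀ (Real.rpow_nonneg hb0.le _) hsmall k

lemma cover_ge_one {b r : ℝ} (hb1 : 1 < b) (hr : 0 < r) {t : ℝ} (ht1 : 1 ≤ t) :
    ∃ k : ℕ, ENNReal.ofReal (t ^ (-(1/r)))
      ≤ ENNReal.ofReal (b ^ ((k:ℝ) * (-(1/r)))) * iov (b ^ ((k:ℝ)+1)) t := by
  have hb0 : (0:ℝ) < b := lt_trans one_pos hb1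
  have ht0 : 0 < t := lt_of_lt_of_le one_pos ht1
  set k := ⌊Real.logb b t⌋₊ with hkdef
  have hlog0 : 0 ≤ Real.logb b t := Real.logb_nonneg hb1 ht1
  have h1 : b ^ ((k:ℝ)) ≤ t := by
    have hk : (k:ℝ) ≤ Real.logb b t := Nat.floor_le hlog0
    calc b ^ ((k:ℝ)) ≤ b ^ Real.logb b t := Real.rpow_le_rpow_of_exponent_le hb1.le hk
      _ = t := Real.rpow_logb hb0 hb1.ne' ht0
  have h2 : t < b ^ ((k:ℝ)+1) := by
    have hk : Real.logb b t < (k:ℝ) + 1 := Nat.lt_floor_add_one _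
    calc t = b ^ Real.logb b t := (Real.rpow_logb hb0 hb1.ne' ht0).symm
      _ < b ^ ((k:ℝ)+1) := Real.rpow_lt_rpow_of_exponent_lt hb1 hk
  refine ⟨k, ?_⟩
  have hiov1 : iov (b ^ ((k:ℝ)+1)) t = 1 := by
    unfold iov
    rw [if_pos ((ENNReal.ofReal_lt_ofReal_iff (Real.rpow_pos_of_pos hb0 _)).2 h2)]
  rw [hiov1, mul_one]
  apply ENNReal.ofReal_le_ofReal
  have hle : t ^ (-(1/r)) ≤ (b ^ ((k:ℝ))) ^ (-(1/r)) :=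
    Real.rpow_le_rpow_of_nonpos (Real.rpow_pos_of_pos hb0 _) h1
      (neg_nonpos.mpr (by positivity))
  rw [Real.rpow_mul hb0.le]
  exact hle

lemma cover_lt_one {b β : ℝ} (hb1 : 1 < b) (hβ : 0 < β) {t : ℝ} (ht0 : 0 < t) (ht1 : t < 1) :
    ∃ k : ℕ, ENNReal.ofReal (t ^ (-β))
      ≤ ENNReal.ofReal (b ^ (((k:ℝ)+1) * β)) * iov (b ^ (-(k:ℝ))) t := by
  have hb0 : (0:ℝ) < b := lt_trans one_pos hb1
  have hlog : Real.logb b t < 0 := Real.logb_neg hb1 ht0 ht1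
  set m := ⌈-(Real.logb b t)⌉₊ with hm
  have hm1 : 1 ≤ m := Nat.one_le_ceil_iff.mpr (by linarith)
  set k := m - 1 with hk
  have hmk : (k:ℝ) + 1 = (m:ℝ) := by
    have h : k + 1 = m := Nat.succ_pred_eq_of_pos hm1
    exact_mod_cast congrArg (fun x : ℕ => (x:ℝ)) h
  have h1 : b ^ (-((k:ℝ)+1)) ≤ t := by
    have hle : -(Real.logb b t) ≤ (k:ℝ)+1 := by rw [hmk]; exact Nat.le_ceil _
    have h2 : -((k:ℝ)+1) ≤ Real.logb b t := by linarith
    calc b ^ (-((k:ℝ)+1)) ≤ b ^ Real.logb b t := Real.rpow_le_rpow_of_exponent_le hb1.le h2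
      _ = t := Real.rpow_logb hb0 hb1.ne' ht0
  have h2 : t < b ^ (-(k:ℝ)) := by
    have hc : (m:ℝ) < -(Real.logb b t) + 1 := Nat.ceil_lt_add_one (by linarith)
    have hlt : Real.logb b t < -(k:ℝ) := by
      have hkm : (k:ℝ) = (m:ℝ) - 1 := by linarith
      rw [hkm]; linarith
    calc t = b ^ Real.logb b t := (Real.rpow_logb hb0 hb1.ne' ht0).symm
      _ < b ^ (-(k:ℝ)) := Real.rpow_lt_rpow_of_exponent_lt hb1 hlt
  refine ⟨k, ?_⟩
  have hiov1 : iov (b ^ (-(k:ℝ))) t = 1 := by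
    unfold iov
    rw [if_pos ((ENNReal.ofReal_lt_ofReal_iff (Real.rpow_pos_of_pos hb0 _)).2 h2)]
  rw [hiov1, mul_one]
  apply ENNReal.ofReal_le_ofReal
  calc t ^ (-β) ≤ (b ^ (-((k:ℝ)+1))) ^ (-β) :=
        Real.rpow_le_rpow_of_nonpos (Real.rpow_pos_of_pos hb0 _) h1 (neg_nonpos.mpr hβ.le)
    _ = b ^ (((k:ℝ)+1) * β) := by
        rw [← Real.rpow_mul hb0.le]
        congr 1
        ring


theorem stmt7 (E : RIQBFS) (Θ r : ℝ) (hΘ : 0 < Θ) (hr : 0 < r)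
    (hrE : ENNReal.ofReal r < lowerBoyd E)
    (hq : (upperBoyd E ≠ ⊤ ∧
        ENNReal.ofReal (1 / r) < ENNReal.ofReal (1 / Θ) + (upperBoyd E)⁻¹) ∨
      (upperBoyd E = ⊤ ∧ 1 / r ≤ 1 / Θ)) :
    E.ρ (fun t => min (ENNReal.ofReal (t ^ (-(1 / r))))
      (ENNReal.ofReal (t ^ (1 / Θ - 1 / r)))) < ⊤ := by
  classical
  have hNfin : E.ρ (iov 1) ≠ ⊤ := iov_one_ne_top E
  set N := E.ρ (iov 1) with hN
  have hC1 : 1 ≤ E.C := E.one_le_C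
  have hC0 : (0:ℝ) < E.C := lt_of_lt_of_le one_pos hC1
  have h2C1 : (1:ℝ) < 2 * E.C := by nlinarith
  have h2C0 : (0:ℝ) < 2 * E.C := by linarith
  -- extract p from the lower Boyd index hypothesis
  obtain ⟨x, hx, hrx⟩ := lt_sSup_iff.mp hrE
  obtain ⟨p, ⟨hp0, c₁, hc₁, hdil₁⟩, rfl⟩ := hx
  have hrp : r < p := (ENNReal.ofReal_lt_ofReal_iff hp0).1 hrx
  have hδ₁ : 0 < 1/r - 1/p := by
    have h := one_div_lt_one_div_of_lt hr hrp
    linarith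
  -- a convenient conversion
  have hconv : ∀ (A : ℝ) (k : ℕ), 0 ≤ A →
      N * ENNReal.ofReal (A * ((2*E.C)⁻¹)^k)
        = (N * ENNReal.ofReal A) * ((ENNReal.ofReal (2*E.C))⁻¹)^k := by
    intro A k hA
    rw [ENNReal.ofReal_mul hA, ENNReal.ofReal_pow (by positivity),
      ENNReal.ofReal_inv_of_pos h2C0, mul_assoc]
  rcases le_or_gt (1/r) (1/Θ) with hcase | hcase
  · -- CASE A : the exponent 1/Θ - 1/r is nonnegative
    set δ := 1/r - 1/p with hδdef
    have hδ : 0 < δ := hδ₁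
    set b : ℝ := max 2 ((2*E.C) ^ δ⁻¹) with hbdef
    have hb2 : (2:ℝ) ≤ b := le_max_left _ _
    have hb1 : (1:ℝ) < b := lt_of_lt_of_le one_lt_two hb2
    have hb0 : (0:ℝ) < b := lt_trans one_pos hb1
    have hbδ : 2*E.C ≤ b ^ δ := by
      calc 2*E.C = ((2*E.C) ^ δ⁻¹) ^ δ := by
            rw [← Real.rpow_mul h2C0.le, inv_mul_cancel₀ hδ.ne', Real.rpow_one]
        _ ≤ b ^ δ := Real.rpow_le_rpow (Real.rpow_nonneg h2C0.le _) (le_max_right _ _) hδ.le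
    have hCb : ∀ e : ℝ, e ≤ -δ → b ^ e ≤ (2*E.C)⁻¹ := by
      intro e he
      calc b ^ e ≤ b ^ (-δ) := Real.rpow_le_rpow_of_exponent_le hb1.le he
        _ = (b ^ δ)⁻¹ := by rw [Real.rpow_neg hb0.le]
        _ ≤ (2*E.C)⁻¹ := inv_anti₀ h2C0 hbδ
    have hsmall : b ^ (1/p - 1/r) ≤ (2*E.C)⁻¹ := hCb _ (by rw [hδdef]; ring_nf; rfl)
    set s : ℕ → ℝ → ℝ≥0∞ :=
      fun k t => ENNReal.ofReal (b ^ ((k:ℝ) * (-(1/r)))) * iov (b ^ ((k:ℝ)+1)) t with hsdef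
    refine main_aux E _ s (N * ENNReal.ofReal (c₁ * b ^ (1/p)))
      (ENNReal.mul_ne_top hNfin ENNReal.ofReal_ne_top) ?_ ?_
    · -- coverage
      intro t ht0
      rcases le_or_gt 1 t with ht1 | ht1
      · obtain ⟨k, hk⟩ := cover_ge_one hb1 hr ht1
        exact ⟨k, le_trans (min_le_left _ _) hk⟩
      · refine ⟨0, ?_⟩
        have hF1 : min (ENNReal.ofReal (t ^ (-(1 / r)))) (ENNReal.ofReal (t ^ (1 / Θ - 1 / r)))
            ≤ 1 := by
          refine le_trans (min_le_right _ _) ?_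
          exact ENNReal.ofReal_le_one.mpr (Real.rpow_le_one ht0.le ht1.le (by linarith))
        have hs0 : s 0 t = 1 := by
          have hc : ((0:ℕ):ℝ) * (-(1/r)) = 0 := by norm_num
          have he : ((0:ℕ):ℝ) + 1 = 1 := by norm_num
          have hiov1 : iov (b ^ (((0:ℕ):ℝ)+1)) t = 1 := by
            unfold iov
            rw [if_pos]
            rw [he, Real.rpow_one]
            exact (ENNReal.ofReal_lt_ofReal_iff hb0).2 (lt_of_lt_of_le ht1 hb1.le)
          rw [hsdef]
          simp only [hc, Real.rpow_zero, ENNReal.ofReal_one, one_mul]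
          exact hiov1
        rw [hs0]
        exact hF1
    · -- the geometric bound
      intro k
      have hg := g_bound E hb1 hr hp0 hc₁ hdil₁ hsmall k
      calc E.ρ (s k) ≤ N * ENNReal.ofReal ((c₁ * b ^ (1/p)) * ((2*E.C)⁻¹)^k) := hg
        _ = (N * ENNReal.ofReal (c₁ * b ^ (1/p))) * ((ENNReal.ofReal (2*E.C))⁻¹)^k :=
            hconv _ k (by positivity)
  · -- CASE B : the exponent 1/Θ - 1/r is negative; we need the upper Boyd index
    set β := 1/r - 1/Θ with hβdef
    have hβ : 0 < β := by simp only [hβdef]; linarith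
    have hqdata : ENNReal.ofReal (1 / r) < ENNReal.ofReal (1 / Θ) + (upperBoyd E)⁻¹ := by
      rcases hq with h | ⟨_, h2⟩
      · exact h.2
      · exfalso; rw [hβdef] at hβ; linarith
    have hsplit : ENNReal.ofReal (1/r) = ENNReal.ofReal (1/Θ) + ENNReal.ofReal β := by
      rw [← ENNReal.ofReal_add (by positivity) hβ.le]
      congr 1
      rw [hβdef]; ring
    have hβlt : ENNReal.ofReal β < (upperBoyd E)⁻¹ := by
      rw [hsplit] at hqdata
      exact (ENNReal.add_lt_add_iff_left ENNReal.ofReal_ne_top).1 hqdata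
    have hUlt : upperBoyd E < (ENNReal.ofReal β)⁻¹ := ENNReal.lt_inv_iff_lt_inv.1 hβlt
    obtain ⟨y, hy, hylt⟩ := sInf_lt_iff.1 hUlt
    obtain ⟨q, ⟨hq0, c₂, hc₂, hdil₂⟩, rfl⟩ := hy
    have hqβ : β < 1/q := by
      have h1 : ENNReal.ofReal q < ENNReal.ofReal β⁻¹ := by
        rwa [ENNReal.ofReal_inv_of_pos hβ]
      have h2 : q < β⁻¹ := (ENNReal.ofReal_lt_ofReal_iff (by positivity)).1 h1
      rw [lt_div_iff₀ hq0]
      calc β * q < β * β⁻¹ := by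
            exact mul_lt_mul_of_pos_left h2 hβ
        _ = 1 := mul_inv_cancel₀ hβ.ne'
    have hδ₂ : 0 < 1/q - β := by linarith
    set δ := min (1/r - 1/p) (1/q - β) with hδdef
    have hδ : 0 < δ := lt_min hδ₁ hδ₂
    set b : ℝ := max 2 ((2*E.C) ^ δ⁻¹) with hbdef
    have hb2 : (2:ℝ) ≤ b := le_max_left _ _
    have hb1 : (1:ℝ) < b := lt_of_lt_of_le one_lt_two hb2
    have hb0 : (0:ℝ) < b := lt_trans one_pos hb1
    have hbδ : 2*E.C ≤ b ^ δ := by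
      calc 2*E.C = ((2*E.C) ^ δ⁻¹) ^ δ := by
            rw [← Real.rpow_mul h2C0.le, inv_mul_cancel₀ hδ.ne', Real.rpow_one]
        _ ≤ b ^ δ := Real.rpow_le_rpow (Real.rpow_nonneg h2C0.le _) (le_max_right _ _) hδ.le
    have hCb : ∀ e : ℝ, e ≤ -δ → b ^ e ≤ (2*E.C)⁻¹ := by
      intro e he
      calc b ^ e ≤ b ^ (-δ) := Real.rpow_le_rpow_of_exponent_le hb1.le he
        _ = (b ^ δ)⁻¹ := by rw [Real.rpow_neg hb0.le]
        _ ≤ (2*E.C)⁻¹ := inv_anti₀ h2C0 hbδ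
    have hsmall₁ : b ^ (1/p - 1/r) ≤ (2*E.C)⁻¹ := by
      refine hCb _ ?_
      have : δ ≤ 1/r - 1/p := min_le_left _ _
      linarith
    have hsmall₂ : b ^ (β - 1/q) ≤ (2*E.C)⁻¹ := by
      refine hCb _ ?_
      have : δ ≤ 1/q - β := min_le_right _ _
      linarith
    set g : ℕ → ℝ → ℝ≥0∞ :=
      fun k t => ENNReal.ofReal (b ^ ((k:ℝ) * (-(1/r)))) * iov (b ^ ((k:ℝ)+1)) t with hgdef
    set h : ℕ → ℝ → ℝ≥0∞ :=
      fun k t => ENNReal.ofReal (b ^ (((k:ℝ)+1) * β)) * iov (b ^ (-(k:ℝ))) t with hhdef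
    set s : ℕ → ℝ → ℝ≥0∞ := fun k t => g k t + h k t with hsdef
    set K : ℝ≥0∞ := ENNReal.ofReal E.C *
      (N * ENNReal.ofReal (c₁ * b ^ (1/p)) + N * ENNReal.ofReal (c₂ * b ^ β)) with hKdef
    refine main_aux E _ s K ?_ ?_ ?_
    · rw [hKdef]
      exact ENNReal.mul_ne_top ENNReal.ofReal_ne_top
        (ENNReal.add_ne_top.2 ⟨ENNReal.mul_ne_top hNfin ENNReal.ofReal_ne_top,
          ENNReal.mul_ne_top hNfin ENNReal.ofReal_ne_top⟩)
    · -- coverage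
      intro t ht0
      rcases le_or_gt 1 t with ht1 | ht1
      · obtain ⟨k, hk⟩ := cover_ge_one hb1 hr ht1
        exact ⟨k, le_trans (le_trans (min_le_left _ _) hk) le_self_add⟩
      · obtain ⟨k, hk⟩ := cover_lt_one hb1 hβ ht0 ht1
        refine ⟨k, ?_⟩
        have hexp : t ^ (1/Θ - 1/r) = t ^ (-β) := by
          congr 1
          rw [hβdef]; ring
        refine le_trans (le_trans (min_le_right _ _) ?_) le_add_self
        rw [hexp]
        exact hk
    · -- the geometric bound
      intro k
      have hgk := g_bound E hb1 hr hp0 hc₁ hdil₁ hsmall₁ k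
      have hhk := h_bound E hb1 hβ hq0 hc₂ hdil₂ hsmall₂ k
      calc E.ρ (s k) ≤ ENNReal.ofReal E.C * (E.ρ (g k) + E.ρ (h k)) := E.quasi_triangle _ _
        _ ≤ ENNReal.ofReal E.C *
              ((N * ENNReal.ofReal (c₁ * b ^ (1/p))) * ((ENNReal.ofReal (2*E.C))⁻¹)^k +
               (N * ENNReal.ofReal (c₂ * b ^ β)) * ((ENNReal.ofReal (2*E.C))⁻¹)^k) := by
            refine mul_le_mul' le_rfl (add_le_add ?_ ?_)
            · exact le_trans hgk (le_of_eq (hconv _ k (by positivity)))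
            · exact le_trans hhk (le_of_eq (hconv _ k (by positivity)))
        _ = K * ((ENNReal.ofReal (2*E.C))⁻¹)^k := by
            rw [hKdef]; ring
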